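/- For every n ≥ 5, the gp-chromatic number of the cycle C_n equals ⌈n/3⌉. -/

import Mathlib

open SimpleGraph
open scoped Fin.NatCast Fin.CommRing

/-- A set `S` is in general position: no shortest path contains more than two vertices of `S`. -/
def IsGenPosSet {V : Type*} (G : SimpleGraph V) (S : Set V) : Prop :=
  ∀ ⦃u v : V⦄ (p : G.Walk u v), p.IsPath → p.length = G.dist u v →
    ∀ x y z, x ∈ S → y ∈ S → z ∈ S →
      x ∈ p.support → y ∈ p.support → z ∈ p.support →
      x = y ∨ y = z ∨ x = z

/-- `G` can be coloured with `k` colours so that every colour class is in general position. -/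
def GpColorable {V : Type*} (G : SimpleGraph V) (k : ℕ) : Prop :=
  ∃ c : V → Fin k, ∀ i, IsGenPosSet G {v | c v = i}

/-- The gp-chromatic number: least number of colours in a colouring whose classes are
general position sets. -/
noncomputable def gpChromatic {V : Type*} (G : SimpleGraph V) : ℕ :=
  sInf {k | GpColorable G k}

variable {n : ℕ}

lemma fin_sub_val [NeZero n] (x y : Fin n) :
    (x - y).val = if y.val ≤ x.val then x.val - y.val else x.val + n - y.val := by
  have hx := x.isLt
  have hy := y.isLt
  rw [Fin.sub_def]
  show (n - y.val + x.val) % n = _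
  split_ifs with h
  · have h1 : n - y.val + x.val = n + (x.val - y.val) := by omega
    rw [h1, Nat.add_mod_left, Nat.mod_eq_of_lt (by omega)]
  · rw [Nat.mod_eq_of_lt (by omega)]; omega

lemma fin_val_one [NeZero n] (hn : 2 ≤ n) : (1 : Fin n).val = 1 := by
  rcases n with _ | _ | n
  · omega
  · omega
  · rfl

lemma cycle_adj_succ [NeZero n] (hn : 2 ≤ n) (a : Fin n) : (cycleGraph n).Adj a (a + 1) := by
  rw [cycleGraph_adj']
  right
  have : a + 1 - a = 1 := by ring
  rw [this, fin_val_one hn]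

def walkUp [NeZero n] (hn : 2 ≤ n) (u : Fin n) : (m : ℕ) → (cycleGraph n).Walk u (u + (m : Fin n))
  | 0 => Walk.nil.copy rfl (by simp)
  | (m+1) => ((walkUp hn u m).concat (cycle_adj_succ hn _)).copy rfl (by push_cast; ring)

lemma walkUp_length [NeZero n] (hn : 2 ≤ n) (u : Fin n) (m : ℕ) :
    (walkUp hn u m).length = m := by
  induction m with
  | zero => simp [walkUp]
  | succ m ih => simp [walkUp, Walk.length_concat, ih]

lemma walkUp_support [NeZero n] (hn : 2 ≤ n) (u : Fin n) (m : ℕ) :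
    (walkUp hn u m).support = (List.range (m+1)).map (fun j : ℕ => u + (j : Fin n)) := by
  induction m with
  | zero =>
      rw [walkUp, Walk.support_copy, Walk.support_nil]
      norm_num [List.range_succ]
  | succ m ih =>
      rw [walkUp, Walk.support_copy, Walk.support_concat, ih, List.range_succ, List.map_append,
        List.map_singleton]
      rw [List.range_succ (n := m+1), List.map_append, List.range_succ (n := m),
        List.map_append, List.map_singleton, List.map_singleton]
      have : u + ((m+1 : ℕ) : Fin n) = u + (m : Fin n) + 1 := by push_cast; ring
      rw [this]

lemma fin_cast_inj_of_lt [NeZero n] {i j : ℕ} (hi : i < n) (hj : j < n)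
    (h : (i : Fin n) = (j : Fin n)) : i = j := by
  have := congrArg Fin.val h
  rwa [Fin.val_cast_of_lt hi, Fin.val_cast_of_lt hj] at this

lemma walkUp_isPath [NeZero n] (hn : 2 ≤ n) (u : Fin n) {m : ℕ} (hm : m < n) :
    (walkUp hn u m).IsPath := by
  rw [Walk.isPath_def, walkUp_support]
  refine List.Nodup.map_on ?_ List.nodup_range
  intro i hi j hj hij
  rw [List.mem_range] at hi hj
  have : (i : Fin n) = (j : Fin n) := by
    have := add_left_cancel hij
    exact this
  exact fin_cast_inj_of_lt (by omega) (by omega) this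

lemma dist_le_sub_val [NeZero n] (hn : 2 ≤ n) (u v : Fin n) :
    (cycleGraph n).dist u v ≤ (v - u).val := by
  have h : u + (((v - u).val : ℕ) : Fin n) = v := by rw [Fin.cast_val_eq_self]; ring
  have h2 := dist_le ((walkUp hn u ((v - u).val)).copy rfl h)
  rwa [Walk.length_copy, walkUp_length] at h2

lemma walk_length_ge [NeZero n] (hn : 2 ≤ n) {u v : Fin n} (p : (cycleGraph n).Walk u v) :
    min (v - u).val (u - v).val ≤ p.length := by
  induction p with
  | nil => simp
  | @cons u w v h q ih =>
      rw [cycleGraph_adj'] at h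
      rw [fin_sub_val, fin_sub_val] at *
      rw [Walk.length_cons]
      have hu := u.isLt; have hv := v.isLt; have hw := w.isLt
      split_ifs at * <;> omega

lemma dist_cycle [NeZero n] (hn : 2 ≤ n) (u v : Fin n) :
    (cycleGraph n).dist u v = min (v - u).val (u - v).val := by
  refine le_antisymm (le_min (dist_le_sub_val hn u v) ?_) ?_
  · rw [SimpleGraph.dist_comm]; exact dist_le_sub_val hn v u
  · obtain ⟨p, hp⟩ := (cycleGraph_preconnected u v).exists_walk_length_eq_dist
    rw [← hp]
    exact walk_length_ge hn p

lemma step_map [NeZero n] (u w : Fin n) (L : ℕ) (f g : ℕ → Fin n)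
    (hf0 : g 0 = u) (hfg : ∀ j, f j = g (j+1)) :
    u :: (List.range (L+1)).map f = (List.range (L+2)).map g := by
  rw [List.range_succ_eq_map (n := L+1), List.map_cons, List.map_map, hf0]
  congr 1
  refine List.map_congr_left (fun j _ => ?_)
  exact hfg j

lemma adj_cases [NeZero n] (hn : 2 ≤ n) {u w : Fin n} (h : (cycleGraph n).Adj u w) :
    w = u + 1 ∨ w = u - 1 := by
  rw [cycleGraph_adj'] at h
  rcases h with h | h
  · right
    have h1 : u - w = 1 := Fin.ext (by rw [h, fin_val_one hn])
    rw [← h1]; ring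
  · left
    have h1 : w - u = 1 := Fin.ext (by rw [h, fin_val_one hn])
    rw [← h1]; ring

lemma path_support_structure [NeZero n] (hn : 2 ≤ n) {u v : Fin n}
    (p : (cycleGraph n).Walk u v) (hp : p.IsPath) :
    p.support = (List.range (p.length+1)).map (fun j : ℕ => u + (j : Fin n)) ∨
    p.support = (List.range (p.length+1)).map (fun j : ℕ => u - (j : Fin n)) := by
  induction p with
  | nil => left; simp [List.range_succ]
  | @cons u w v h q ih =>
      rw [Walk.cons_isPath_iff] at hp
      obtain ⟨hq, hu⟩ := hp
      rw [Walk.support_cons, Walk.length_cons]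
      rcases adj_cases hn h with hw | hw
      · -- w = u + 1
        rcases ih hq with hsup | hsup
        · left
          rw [hsup]
          exact step_map u w _ _ _ (by norm_num) (fun j => by rw [hw]; push_cast; ring)
        · rcases Nat.eq_zero_or_pos q.length with hL | hL
          · left
            rw [hsup, hL]
            simp [List.range_succ, hw]
          · exfalso
            apply hu
            rw [hsup]
            refine List.mem_map.mpr ⟨1, List.mem_range.mpr (by omega), ?_⟩
            rw [hw]; push_cast; ring
      · -- w = u - 1
        rcases ih hq with hsup | hsup
        · rcases Nat.eq_zero_or_pos q.length with hL | hL
          · right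
            rw [hsup, hL]
            simp [List.range_succ, hw]
          · exfalso
            apply hu
            rw [hsup]
            refine List.mem_map.mpr ⟨1, List.mem_range.mpr (by omega), ?_⟩
            rw [hw]; push_cast; ring
        · right
          rw [hsup]
          exact step_map u w _ _ _ (by norm_num) (fun j => by rw [hw]; push_cast; ring)

lemma mod_cases {p k r : ℕ} (hk : 0 < k) (hp : p < 3 * k) (hr : p % k = r) :
    p = r ∨ p = r + k ∨ p = r + 2 * k := by
  have hd := Nat.div_add_mod p k
  have hq : p / k < 3 := Nat.div_lt_of_lt_mul (by omega)
  interval_cases h : p / k <;> omega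

/-- Core arithmetic contradiction: three distinct same-class vertices can't lie
consecutively along an arc of length ≤ n/2. -/
lemma classE (hn : 5 ≤ n) (x y z : Fin n) (hxy : x ≠ y) (hyz : y ≠ z) (hxz : x ≠ z)
    (hcx : x.val % ((n+2)/3) = y.val % ((n+2)/3))
    (hcy : y.val % ((n+2)/3) = z.val % ((n+2)/3))
    (hsum : 2 * ((y - x).val + (z - y).val) ≤ n) : False := by
  haveI : NeZero n := ⟨by omega⟩
  set k := (n+2)/3 with hk
  have hk3 : 3 * k ≤ n + 2 ∧ n ≤ 3 * k ∧ 2 ≤ k := by omega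
  have hx := x.isLt; have hy := y.isLt; have hz := z.isLt
  have hvxy : x.val ≠ y.val := fun h => hxy (Fin.ext h)
  have hvyz : y.val ≠ z.val := fun h => hyz (Fin.ext h)
  have hvxz : x.val ≠ z.val := fun h => hxz (Fin.ext h)
  obtain ⟨r, h1, h2, h3⟩ :
      ∃ r, (x.val = r ∨ x.val = r + k ∨ x.val = r + 2*k) ∧
        (y.val = r ∨ y.val = r + k ∨ y.val = r + 2*k) ∧
        (z.val = r ∨ z.val = r + k ∨ z.val = r + 2*k) :=
    ⟨x.val % k, mod_cases (by omega) (by omega) rfl,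
      mod_cases (by omega) (by omega) hcx.symm,
      mod_cases (by omega) (by omega) (hcx.trans hcy).symm⟩
  rw [fin_sub_val, fin_sub_val] at hsum
  split_ifs at hsum <;> omega

lemma diffval [NeZero n] (u : Fin n) {ja jb : ℕ} (hab : ja ≤ jb) (hb : jb < n) :
    ((u + (jb : Fin n)) - (u + (ja : Fin n))).val = jb - ja := by
  have h : (u + (jb : Fin n)) - (u + (ja : Fin n)) = ((jb - ja : ℕ) : Fin n) := by
    rw [Nat.cast_sub hab]; ring
  rw [h, Fin.val_cast_of_lt (by omega)]

lemma keySorted [NeZero n] (hn : 5 ≤ n) (u : Fin n) {j1 j2 j3 L : ℕ} (h12 : j1 < j2)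
    (h23 : j2 < j3) (h3 : j3 ≤ L) (hL : 2 * L ≤ n) (x y z : Fin n)
    (hx : x = u + (j1 : Fin n)) (hy : y = u + (j2 : Fin n)) (hz : z = u + (j3 : Fin n))
    (hxy : x ≠ y) (hyz : y ≠ z) (hxz : x ≠ z)
    (hcx : x.val % ((n+2)/3) = y.val % ((n+2)/3))
    (hcy : y.val % ((n+2)/3) = z.val % ((n+2)/3)) : False := by
  refine classE hn x y z hxy hyz hxz hcx hcy ?_
  rw [hx, hy, hz, diffval u (by omega) (by omega), diffval u (by omega) (by omega)]
  omega

lemma keyPlus [NeZero n] (hn : 5 ≤ n) (u : Fin n) {jx jy jz L : ℕ} (hL : 2 * L ≤ n)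
    (hjx : jx ≤ L) (hjy : jy ≤ L) (hjz : jz ≤ L) (x y z : Fin n)
    (hx : x = u + (jx : Fin n)) (hy : y = u + (jy : Fin n)) (hz : z = u + (jz : Fin n))
    (hxy : x ≠ y) (hyz : y ≠ z) (hxz : x ≠ z)
    (hcx : x.val % ((n+2)/3) = y.val % ((n+2)/3))
    (hcy : y.val % ((n+2)/3) = z.val % ((n+2)/3)) : False := by
  have hcz : x.val % ((n+2)/3) = z.val % ((n+2)/3) := hcx.trans hcy
  have nxy : jx ≠ jy := fun h => hxy (by rw [hx, hy, h])
  have nyz : jy ≠ jz := fun h => hyz (by rw [hy, hz, h])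
  have nxz : jx ≠ jz := fun h => hxz (by rw [hx, hz, h])
  rcases Nat.lt_trichotomy jx jy with h1 | h1 | h1
  · rcases Nat.lt_trichotomy jy jz with h2 | h2 | h2
    · exact keySorted hn u h1 h2 hjz hL x y z hx hy hz hxy hyz hxz hcx hcy
    · exact nyz h2
    · rcases Nat.lt_trichotomy jx jz with h3 | h3 | h3
      · exact keySorted hn u h3 h2 hjy hL x z y hx hz hy hxz hyz.symm hxy hcz hcy.symm
      · exact nxz h3
      · exact keySorted hn u h3 h1 hjy hL z x y hz hx hy hxz.symm hxy hyz.symm hcz.symm hcx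
  · exact nxy h1
  · rcases Nat.lt_trichotomy jy jz with h2 | h2 | h2
    · rcases Nat.lt_trichotomy jx jz with h3 | h3 | h3
      · exact keySorted hn u h1 h3 hjz hL y x z hy hx hz hxy.symm hxz hyz hcx.symm hcz
      · exact nxz h3
      · exact keySorted hn u h2 h3 hjx hL y z x hy hz hx hyz hxz.symm hxy.symm hcy hcz.symm
    · exact nyz h2
    · exact keySorted hn u h2 h1 hjx hL z y x hz hy hx hyz.symm hxy.symm hxz.symm hcy.symm hcx.symm

lemma two_mul_dist_le [NeZero n] (hn : 2 ≤ n) (u v : Fin n) :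
    2 * (cycleGraph n).dist u v ≤ n := by
  rw [dist_cycle hn, fin_sub_val, fin_sub_val]
  have hu := u.isLt; have hv := v.isLt
  split_ifs <;> omega

lemma gp_colorable_upper (hn : 5 ≤ n) : GpColorable (cycleGraph n) ((n+2)/3) := by
  haveI : NeZero n := ⟨by omega⟩
  have hn2 : 2 ≤ n := by omega
  set k := (n+2)/3 with hk
  refine ⟨fun v => ⟨v.val % k, Nat.mod_lt _ (by omega)⟩, fun i => ?_⟩
  intro u v p hpath hlen x y z hx hy hz hxs hys hzs
  by_contra hcon
  push_neg at hcon
  obtain ⟨hxy, hyz, hxz⟩ := hcon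
  simp only [Set.mem_setOf_eq, Fin.mk.injEq] at hx hy hz
  have hcx : x.val % k = y.val % k := congrArg Fin.val (hx.trans hy.symm)
  have hcy : y.val % k = z.val % k := congrArg Fin.val (hy.trans hz.symm)
  have hL : 2 * p.length ≤ n := by rw [hlen]; exact two_mul_dist_le hn2 u v
  rcases path_support_structure hn2 p hpath with hs | hs
  · rw [hs] at hxs hys hzs
    obtain ⟨jx, hjx, hxe⟩ := List.mem_map.mp hxs
    obtain ⟨jy, hjy, hye⟩ := List.mem_map.mp hys
    obtain ⟨jz, hjz, hze⟩ := List.mem_map.mp hzs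
    rw [List.mem_range] at hjx hjy hjz
    exact keyPlus hn u (L := p.length) hL (by omega) (by omega) (by omega) x y z
      hxe.symm hye.symm hze.symm hxy hyz hxz hcx hcy
  · rw [hs] at hxs hys hzs
    obtain ⟨jx, hjx, hxe⟩ := List.mem_map.mp hxs
    obtain ⟨jy, hjy, hye⟩ := List.mem_map.mp hys
    obtain ⟨jz, hjz, hze⟩ := List.mem_map.mp hzs
    rw [List.mem_range] at hjx hjy hjz
    set L := p.length with hLdef
    have conv : ∀ j : ℕ, j ≤ L → u - (j : Fin n) = (u - (L : Fin n)) + ((L - j : ℕ) : Fin n) := by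
      intro j hj
      rw [Nat.cast_sub hj]
      ring
    exact keyPlus hn (u - (L : Fin n)) (jx := L - jx) (jy := L - jy) (jz := L - jz) (L := L) hL
      (by omega) (by omega) (by omega) x y z
      (by rw [← hxe, conv jx (by omega)]) (by rw [← hye, conv jy (by omega)])
      (by rw [← hze, conv jz (by omega)]) hxy hyz hxz hcx hcy

lemma sort3 {d1 d2 d3 : ℕ} (h12 : d1 ≠ d2) (h23 : d2 ≠ d3) (h13 : d1 ≠ d3) :
    ∃ q1 q2 q3 : ℕ, q1 < q2 ∧ q2 < q3 ∧
      ∀ P : ℕ → Prop, P d1 → P d2 → P d3 → (P q1 ∧ P q2 ∧ P q3) := by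
  rcases Nat.lt_trichotomy d1 d2 with h1 | h1 | h1
  · rcases Nat.lt_trichotomy d2 d3 with h2 | h2 | h2
    · exact ⟨d1, d2, d3, h1, h2, fun P p1 p2 p3 => ⟨p1, p2, p3⟩⟩
    · exact absurd h2 h23
    · rcases Nat.lt_trichotomy d1 d3 with h3 | h3 | h3
      · exact ⟨d1, d3, d2, h3, h2, fun P p1 p2 p3 => ⟨p1, p3, p2⟩⟩
      · exact absurd h3 h13
      · exact ⟨d3, d1, d2, h3, h1, fun P p1 p2 p3 => ⟨p3, p1, p2⟩⟩
  · exact absurd h1 h12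
  · rcases Nat.lt_trichotomy d2 d3 with h2 | h2 | h2
    · rcases Nat.lt_trichotomy d1 d3 with h3 | h3 | h3
      · exact ⟨d2, d1, d3, h1, h3, fun P p1 p2 p3 => ⟨p2, p1, p3⟩⟩
      · exact absurd h3 h13
      · exact ⟨d2, d3, d1, h2, h3, fun P p1 p2 p3 => ⟨p2, p3, p1⟩⟩
    · exact absurd h2 h23
    · exact ⟨d3, d2, d1, h2, h1, fun P p1 p2 p3 => ⟨p3, p2, p1⟩⟩

lemma fin_add_cast_ne [NeZero n] (w : Fin n) {a b : ℕ} (ha : a < n) (hb : b < n)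
    (hab : a ≠ b) : w + (a : Fin n) ≠ w + (b : Fin n) := by
  intro h
  exact hab (fin_cast_inj_of_lt ha hb (add_left_cancel h))

lemma not_genpos_of_four (hn : 5 ≤ n) (S : Set (Fin n)) (w x y z : Fin n)
    (hw : w ∈ S) (hx : x ∈ S) (hy : y ∈ S) (hz : z ∈ S)
    (hwx : w ≠ x) (hwy : w ≠ y) (hwz : w ≠ z) (hxy : x ≠ y) (hxz : x ≠ z) (hyz : y ≠ z) :
    ¬ IsGenPosSet (cycleGraph n) S := by
  haveI : NeZero n := ⟨by omega⟩
  have hn2 : 2 ≤ n := by omega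
  intro hgp
  -- the three nonzero differences, distinct
  have hsubne : ∀ a b : Fin n, a ≠ b → (a - w).val ≠ (b - w).val := by
    intro a b hab h
    exact hab (by have := Fin.ext h; rwa [sub_left_inj] at this)
  obtain ⟨q1, q2, q3, h12, h23, hP⟩ :=
    sort3 (hsubne x y hxy) (hsubne y z hyz) (hsubne x z hxz)
  have Pd : ∀ a : Fin n, a ∈ S → a ≠ w →
      w + (((a - w).val : ℕ) : Fin n) ∈ S ∧ 1 ≤ (a - w).val ∧ (a - w).val < n := by
    intro a ha haw
    have he : w + (a - w) = a := by ring
    refine ⟨by rw [Fin.cast_val_eq_self, he]; exact ha, ?_, (a - w).isLt⟩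
    have h0 : a - w ≠ 0 := sub_ne_zero.mpr haw
    have h1 : (a - w).val ≠ 0 := fun h => h0 (Fin.ext (by simp [h]))
    omega
  obtain ⟨hq1, hq2, hq3⟩ := hP (fun q => w + (q : Fin n) ∈ S ∧ 1 ≤ q ∧ q < n)
    (Pd x hx hwx.symm) (Pd y hy hwy.symm) (Pd z hz hwz.symm)
  have selfne : ∀ q : ℕ, 1 ≤ q → q < n → w ≠ w + (q : Fin n) := by
    intro q h1 h2 h
    have h3 : (q : Fin n) = 0 := (left_eq_add.mp h)
    have h4 := congrArg Fin.val h3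
    rw [Fin.val_cast_of_lt h2] at h4
    simp at h4
    omega
  rcases le_or_gt (2 * q2) n with hc | hc
  · -- arc from w to w + q2 is shortest
    set p := walkUp hn2 w q2 with hp
    have hpath : p.IsPath := walkUp_isPath hn2 w hq2.2.2
    have e1 : (w + (q2 : Fin n)) - w = (q2 : Fin n) := by ring
    have e2 : w - (w + (q2 : Fin n)) = ((n - q2 : ℕ) : Fin n) := by
      rw [Nat.cast_sub (le_of_lt hq2.2.2), Fin.natCast_self]; ring
    have hlen : p.length = (cycleGraph n).dist w (w + (q2 : Fin n)) := by
      rw [hp, walkUp_length, dist_cycle hn2, e1, e2, Fin.val_cast_of_lt hq2.2.2,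
        Fin.val_cast_of_lt (show n - q2 < n by omega)]
      omega
    have memsup : ∀ j : ℕ, j ≤ q2 → w + (j : Fin n) ∈ p.support := by
      intro j hj
      rw [hp, walkUp_support]
      exact List.mem_map.mpr ⟨j, List.mem_range.mpr (by omega), rfl⟩
    have m0 : w ∈ p.support := by have := memsup 0 (by omega); simpa using this
    rcases hgp p hpath hlen w (w + (q1 : Fin n)) (w + (q2 : Fin n)) hw hq1.1 hq2.1
        m0 (memsup q1 (by omega)) (memsup q2 le_rfl) with h | h | h
    · exact selfne q1 hq1.2.1 hq1.2.2 h
    · exact fin_add_cast_ne w hq1.2.2 hq2.2.2 (by omega) h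
    · exact selfne q2 hq2.2.1 hq2.2.2 h
  · -- arc from w + q2 back around to w is shortest
    have hend : (w + (q2 : Fin n)) + ((n - q2 : ℕ) : Fin n) = w := by
      rw [Nat.cast_sub (le_of_lt hq2.2.2), Fin.natCast_self]; ring
    set p := (walkUp hn2 (w + (q2 : Fin n)) (n - q2)).copy rfl hend with hp
    have hpath : p.IsPath := by
      rw [hp, Walk.isPath_copy]
      exact walkUp_isPath hn2 _ (by omega)
    have e1 : w - (w + (q2 : Fin n)) = ((n - q2 : ℕ) : Fin n) := by
      rw [Nat.cast_sub (le_of_lt hq2.2.2), Fin.natCast_self]; ring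
    have e2 : (w + (q2 : Fin n)) - w = (q2 : Fin n) := by ring
    have hlen : p.length = (cycleGraph n).dist (w + (q2 : Fin n)) w := by
      rw [hp, Walk.length_copy, walkUp_length, dist_cycle hn2, e1, e2,
        Fin.val_cast_of_lt hq2.2.2, Fin.val_cast_of_lt (show n - q2 < n by omega)]
      omega
    have memsup : ∀ j : ℕ, j ≤ n - q2 → (w + (q2 : Fin n)) + (j : Fin n) ∈ p.support := by
      intro j hj
      rw [hp, Walk.support_copy, walkUp_support]
      exact List.mem_map.mpr ⟨j, List.mem_range.mpr (by omega), rfl⟩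
    have m0 : w + (q2 : Fin n) ∈ p.support := by have := memsup 0 (by omega); simpa using this
    have m3 : w + (q3 : Fin n) ∈ p.support := by
      have := memsup (q3 - q2) (by omega)
      have e3 : (w + (q2 : Fin n)) + ((q3 - q2 : ℕ) : Fin n) = w + (q3 : Fin n) := by
        rw [Nat.cast_sub (le_of_lt h23)]; ring
      rwa [e3] at this
    have mw : w ∈ p.support := by
      have := memsup (n - q2) le_rfl
      rwa [hend] at this
    rcases hgp p hpath hlen (w + (q2 : Fin n)) (w + (q3 : Fin n)) w hq2.1 hq3.1 hw
        m0 m3 mw with h | h | h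
    · exact fin_add_cast_ne w hq2.2.2 hq3.2.2 (by omega) h
    · exact selfne q3 hq3.2.1 hq3.2.2 h.symm
    · exact selfne q2 hq2.2.1 hq2.2.2 h.symm


lemma gp_colorable_lower (hn : 5 ≤ n) {k : ℕ} (h : GpColorable (cycleGraph n) k) :
    n ≤ 3 * k := by
  obtain ⟨c, hc⟩ := h
  have hfib : ∀ i : Fin k, (Finset.univ.filter (fun v => c v = i)).card ≤ 3 := by
    intro i
    by_contra hbig
    push_neg at hbig
    set s := Finset.univ.filter (fun v => c v = i) with hs
    obtain ⟨w, hw⟩ := Finset.card_pos.mp (show 0 < s.card by omega)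
    have herase : 2 < (s.erase w).card := by
      rw [Finset.card_erase_of_mem hw]; omega
    obtain ⟨x, y, z, hx, hy, hz, hxy, hxz, hyz⟩ := Finset.two_lt_card_iff.mp herase
    have hmem : ∀ a : Fin n, a ∈ s → a ∈ {v : Fin n | c v = i} := by
      intro a ha
      simpa using (Finset.mem_filter.mp ha).2
    refine not_genpos_of_four hn {v : Fin n | c v = i} w x y z
      (hmem w hw) (hmem x (Finset.mem_of_mem_erase hx)) (hmem y (Finset.mem_of_mem_erase hy))
      (hmem z (Finset.mem_of_mem_erase hz))
      (Ne.symm (Finset.ne_of_mem_erase hx)) (Ne.symm (Finset.ne_of_mem_erase hy))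
      (Ne.symm (Finset.ne_of_mem_erase hz)) hxy hxz hyz (hc i)
  calc n = (Finset.univ : Finset (Fin n)).card := by rw [Finset.card_univ, Fintype.card_fin]
    _ = ∑ i : Fin k, (Finset.univ.filter (fun v => c v = i)).card :=
        Finset.card_eq_sum_card_fiberwise (fun x _ => Finset.mem_univ (c x))
    _ ≤ ∑ _i : Fin k, 3 := Finset.sum_le_sum (fun i _ => hfib i)
    _ = 3 * k := by simp [Finset.sum_const, mul_comm]

/-- For `n ≥ 5`, `χ_gp(C_n) = ⌈n/3⌉`. -/
theorem gpChromatic_cycle (n : ℕ) (hn : 5 ≤ n) :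
    gpChromatic (cycleGraph n) = (n + 2) / 3 := by
  refine le_antisymm (Nat.sInf_le (gp_colorable_upper hn)) ?_
  refine le_csInf ⟨(n + 2) / 3, gp_colorable_upper hn⟩ ?_
  intro k hk
  have := gp_colorable_lower hn hk
  omega
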